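/- Let (X, d, μ) be an upper doubling, geometrically doubling metric measure space and r ∈ (0,1). If f ∈ RBMO(μ), then the function |f|^r satisfies: for all (6, β₆)-doubling balls B ⊂ S, |m_B(|f|^r) − m_S(|f|^r)| ≤ C (1 + δ(B,S))^r ‖f‖_{RBMO(μ)}^r, where m_B denotes the average over B. -/

import Mathlib

open Metric MeasureTheory

/-- Tolsa-Hytönen coefficient `δ(B, S)` of two balls `B ⊆ S`. -/
noncomputable def delta {X : Type*} [MetricSpace X] [MeasurableSpace X]
    (μ : Measure X) (Λ : X → ℝ → ℝ) (cB : X) (rB : ℝ) (cS : X) (rS : ℝ) : ℝ :=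
  (∫⁻ x in ball cS (2 * rS) \ ball cB rB,
      ENNReal.ofReal ((Λ cB (dist x cB))⁻¹) ∂μ).toReal

private lemma real_rpow_add_le {r : ℝ} (hr0 : 0 ≤ r) (hr1 : r ≤ 1) {x y : ℝ}
    (hx : 0 ≤ x) (hy : 0 ≤ y) : (x + y) ^ r ≤ x ^ r + y ^ r := by
  have h := NNReal.rpow_add_le_add_rpow (Real.toNNReal x) (Real.toNNReal y) hr0 hr1
  have h' := NNReal.coe_le_coe.2 h
  simpa only [NNReal.coe_rpow, NNReal.coe_add, Real.coe_toNNReal x hx,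
    Real.coe_toNNReal y hy] using h'

private lemma rpow_sub_le {r : ℝ} (hr0 : 0 ≤ r) (hr1 : r ≤ 1) {x y : ℝ}
    (hy : 0 ≤ y) (hxy : y ≤ x) : x ^ r - y ^ r ≤ (x - y) ^ r := by
  have h := real_rpow_add_le hr0 hr1 (sub_nonneg.2 hxy) hy
  rw [sub_add_cancel] at h
  linarith

private lemma abs_rpow_sub_abs_rpow_le' {r : ℝ} (hr0 : 0 ≤ r) (hr1 : r ≤ 1) (a b : ℝ) :
    abs (|a| ^ r - |b| ^ r) ≤ |a - b| ^ r := by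
  have key : ∀ u v : ℝ, |v| ≤ |u| → |u| ^ r - |v| ^ r ≤ |u - v| ^ r := by
    intro u v huv
    calc |u| ^ r - |v| ^ r ≤ (|u| - |v|) ^ r := rpow_sub_le hr0 hr1 (abs_nonneg v) huv
    _ ≤ |u - v| ^ r :=
        Real.rpow_le_rpow (sub_nonneg.2 huv) (abs_sub_abs_le_abs_sub u v) hr0
  rcases le_total (|b|) (|a|) with h | h
  · rw [abs_of_nonneg (sub_nonneg.2 (Real.rpow_le_rpow (abs_nonneg b) h hr0))]
    exact key a b h
  · rw [abs_of_nonpos (sub_nonpos.2 (Real.rpow_le_rpow (abs_nonneg a) h hr0)), neg_sub,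
      abs_sub_comm]
    exact key b a h

private lemma rpow_le_eps {r : ℝ} (hr0 : 0 < r) (hr1 : r ≤ 1) {t ε : ℝ}
    (ht : 0 ≤ t) (hε : 0 < ε) : t ^ r ≤ ε ^ r + ε ^ (r - 1) * t := by
  rcases le_total t ε with h | h
  · have h1 : t ^ r ≤ ε ^ r := Real.rpow_le_rpow ht h hr0.le
    have h2 : 0 ≤ ε ^ (r - 1) * t := mul_nonneg (Real.rpow_nonneg hε.le _) ht
    linarith
  · have htpos : 0 < t := lt_of_lt_of_le hε h
    have h1 : t ^ r = t ^ (r - 1) * t := by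
      rw [← Real.rpow_add_one htpos.ne' (r - 1)]
      norm_num
    have h2 : t ^ (r - 1) ≤ ε ^ (r - 1) :=
      Real.rpow_le_rpow_of_nonpos hε h (by linarith)
    have h3 : 0 ≤ ε ^ r := Real.rpow_nonneg hε.le _
    nlinarith

private lemma avg_rpow_sub_le {X : Type*} [MetricSpace X] [MeasurableSpace X]
    [BorelSpace X] (μ : Measure X) {r : ℝ} (hr0 : 0 < r) (hr1 : r ≤ 1)
    {f : X → ℝ} {a β : ℝ} {c : X} {ρ : ℝ}
    (hμ0 : μ (ball c ρ) ≠ 0) (hμt : μ (ball c ρ) ≠ ⊤)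
    (hint : IntegrableOn f (ball c ρ) μ)
    (hosc : ∫ x in ball c ρ, |f x - a| ∂μ ≤ β * (μ (ball c ρ)).toReal)
    {ε : ℝ} (hε : 0 < ε) :
    |(⨍ x in ball c ρ, |f x| ^ r ∂μ) - |a| ^ r| ≤ ε ^ r + ε ^ (r - 1) * β := by
  set B := ball c ρ with hB
  set m := (μ B).toReal with hmdef
  have hm : 0 < m := ENNReal.toReal_pos hμ0 hμt
  have hcont : Continuous fun t : ℝ => |t| ^ r :=
    Continuous.rpow_const continuous_abs fun t => Or.inr hr0.le
  have hg : AEStronglyMeasurable (fun x => |f x| ^ r) (μ.restrict B) :=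
    hcont.comp_aestronglyMeasurable hint.1
  have hconst : ∀ b : ℝ, IntegrableOn (fun _ => b) B μ := fun b =>
    integrableOn_const hμt
  have hgint : IntegrableOn (fun x => |f x| ^ r) B μ := by
    refine Integrable.mono' ((hconst 1).add hint.abs) hg ?_
    filter_upwards with x
    simp only [Pi.add_apply]
    rw [Real.norm_eq_abs, abs_of_nonneg (Real.rpow_nonneg (abs_nonneg _) _)]
    rcases le_total (|f x|) 1 with h | h
    · have h1 : |f x| ^ r ≤ 1 := Real.rpow_le_one (abs_nonneg _) h hr0.le
      have h2 : 0 ≤ |f x| := abs_nonneg _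
      linarith
    · have h1 : |f x| ^ r ≤ |f x| ^ (1 : ℝ) :=
        Real.rpow_le_rpow_of_exponent_le h hr1
      rw [Real.rpow_one] at h1
      linarith
  have hfa : IntegrableOn (fun x => |f x - a|) B μ := (hint.sub (hconst a)).abs
  have hsubint : IntegrableOn (fun x => |f x| ^ r - |a| ^ r) B μ :=
    hgint.sub (hconst (|a| ^ r))
  have key : ∫ x in B, abs (|f x| ^ r - |a| ^ r) ∂μ ≤ (ε ^ r + ε ^ (r - 1) * β) * m := by
    have step1 : ∫ x in B, abs (|f x| ^ r - |a| ^ r) ∂μ ≤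
        ∫ x in B, (ε ^ r + ε ^ (r - 1) * |f x - a|) ∂μ := by
      refine setIntegral_mono_on hsubint.abs ((hconst (ε ^ r)).add (hfa.const_mul _))
        measurableSet_ball ?_
      intro x _
      calc abs (|f x| ^ r - |a| ^ r) ≤ |f x - a| ^ r :=
            abs_rpow_sub_abs_rpow_le' hr0.le hr1 _ _
        _ ≤ ε ^ r + ε ^ (r - 1) * |f x - a| := rpow_le_eps hr0 hr1 (abs_nonneg _) hε
    have step2 : ∫ x in B, (ε ^ r + ε ^ (r - 1) * |f x - a|) ∂μ =
        ε ^ r * m + ε ^ (r - 1) * ∫ x in B, |f x - a| ∂μ := by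
      rw [integral_add (hconst (ε ^ r)) (hfa.const_mul _), setIntegral_const,
        integral_const_mul, smul_eq_mul, measureReal_def, ← hmdef]
      ring
    have h3 : ε ^ (r - 1) * ∫ x in B, |f x - a| ∂μ ≤ ε ^ (r - 1) * (β * m) :=
      mul_le_mul_of_nonneg_left hosc (Real.rpow_nonneg hε.le _)
    calc ∫ x in B, abs (|f x| ^ r - |a| ^ r) ∂μ ≤
          ε ^ r * m + ε ^ (r - 1) * ∫ x in B, |f x - a| ∂μ := by
          rw [← step2]; exact step1
      _ ≤ ε ^ r * m + ε ^ (r - 1) * (β * m) := by linarith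
      _ = (ε ^ r + ε ^ (r - 1) * β) * m := by ring
  rw [setAverage_eq, smul_eq_mul, measureReal_def, ← hmdef]
  have heq : m⁻¹ * (∫ x in B, |f x| ^ r ∂μ) - |a| ^ r =
      m⁻¹ * ∫ x in B, (|f x| ^ r - |a| ^ r) ∂μ := by
    rw [integral_sub hgint (hconst (|a| ^ r)), setIntegral_const, smul_eq_mul, measureReal_def, ← hmdef]
    field_simp
  rw [heq, abs_mul, abs_of_nonneg (inv_nonneg.2 hm.le)]
  have habs : |∫ x in B, (|f x| ^ r - |a| ^ r) ∂μ| ≤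
      ∫ x in B, abs (|f x| ^ r - |a| ^ r) ∂μ := by
    simpa [Real.norm_eq_abs] using
      norm_integral_le_integral_norm (μ := μ.restrict B) (fun x => |f x| ^ r - |a| ^ r)
  calc m⁻¹ * |∫ x in B, (|f x| ^ r - |a| ^ r) ∂μ| ≤
        m⁻¹ * ((ε ^ r + ε ^ (r - 1) * β) * m) :=
        mul_le_mul_of_nonneg_left (habs.trans key) (inv_nonneg.2 hm.le)
    _ = ε ^ r + ε ^ (r - 1) * β := by field_simp

/-- For `r ∈ (0,1)` and `f ∈ RBMO(μ)`, the averages of `|f|^r` over `(6, β₆)`-doubling balls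
`B ⊆ S` satisfy `|m_B(|f|^r) - m_S(|f|^r)| ≤ C (1 + δ(B,S))^r ‖f‖_{RBMO}^r`. -/
theorem rbmo_rpow_average_difference {X : Type*} [MetricSpace X] [MeasurableSpace X]
    [BorelSpace X] (μ : Measure X) (Λ : X → ℝ → ℝ) (Cl β₆ : ℝ) (N₀ : ℕ)
    (hΛpos : ∀ (x : X) (r : ℝ), 0 < r → 0 < Λ x r)
    (hΛmono : ∀ (x : X) (r s : ℝ), 0 < r → r ≤ s → Λ x r ≤ Λ x s)
    (hΛdom : ∀ (x : X) (r : ℝ), 0 < r → μ (ball x r) ≤ ENNReal.ofReal (Λ x r))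
    (hΛdouble : ∀ (x : X) (r : ℝ), 0 < r → Λ x r ≤ Cl * Λ x (r / 2))
    (hgd : ∀ (x : X) (r : ℝ), ∃ s : Finset X,
      s.card ≤ N₀ ∧ ball x r ⊆ ⋃ y ∈ s, ball y (r / 2))
    (hball : ∀ (x : X) (r : ℝ), 0 < r → 0 < μ (ball x r) ∧ μ (ball x r) < ⊤)
    (r : ℝ) (hr : r ∈ Set.Ioo (0 : ℝ) 1) :
    ∃ C : ℝ, 0 < C ∧ ∀ (f : X → ℝ) (fB : X → ℝ → ℝ) (K : ℝ), 0 ≤ K →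
      (∀ (c : X) (ρ : ℝ), 0 < ρ → IntegrableOn f (ball c ρ) μ) →
      (∀ (c : X) (ρ : ℝ), 0 < ρ →
        ∫ x in ball c ρ, |f x - fB c ρ| ∂μ ≤ K * (μ (ball c (2 * ρ))).toReal) →
      (∀ (c c' : X) (ρ ρ' : ℝ), 0 < ρ → 0 < ρ' → ball c ρ ⊆ ball c' ρ' →
        |fB c ρ - fB c' ρ'| ≤ K * (1 + delta μ Λ c ρ c' ρ')) →
      ∀ (cB cS : X) (rB rS : ℝ), 0 < rB → 0 < rS →
        ball cB rB ⊆ ball cS rS →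
        μ (ball cB (6 * rB)) ≤ ENNReal.ofReal β₆ * μ (ball cB rB) →
        μ (ball cS (6 * rS)) ≤ ENNReal.ofReal β₆ * μ (ball cS rS) →
        |(⨍ x in ball cB rB, |f x| ^ r ∂μ) - ⨍ x in ball cS rS, |f x| ^ r ∂μ| ≤
          C * (1 + delta μ Λ cB rB cS rS) ^ r * K ^ r := by
  obtain ⟨hr0, hr1⟩ := hr
  refine ⟨4 * (1 + |β₆|) + 1, by positivity, ?_⟩
  intro f fB K hK hint hosc hreg cB cS rB rS hrB hrS hBS hdB hdS
  -- basic measure facts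
  obtain ⟨hμB0, hμBt⟩ := hball cB rB hrB
  obtain ⟨hμS0, hμSt⟩ := hball cS rS hrS
  -- β₆ ≥ 1
  have hβ : 1 ≤ β₆ := by
    by_contra h
    push_neg at h
    have h1 : μ (ball cB rB) ≤ ENNReal.ofReal β₆ * μ (ball cB rB) :=
      le_trans (measure_mono (ball_subset_ball (by linarith))) hdB
    have h2 : ENNReal.ofReal β₆ * μ (ball cB rB) < 1 * μ (ball cB rB) :=
      by rw [mul_comm, mul_comm 1]; exact ENNReal.mul_lt_mul_right hμB0.ne' hμBt.ne (ENNReal.ofReal_lt_one.2 h)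
    rw [one_mul] at h2
    exact absurd (lt_of_le_of_lt h1 h2) (lt_irrefl _)
  have hβ0 : 0 ≤ β₆ := by linarith
  -- doubling consequences
  have hdouble : ∀ (c : X) (ρ : ℝ), 0 < ρ →
      μ (ball c (6 * ρ)) ≤ ENNReal.ofReal β₆ * μ (ball c ρ) →
      (μ (ball c (2 * ρ))).toReal ≤ β₆ * (μ (ball c ρ)).toReal := by
    intro c ρ hρ hd
    obtain ⟨hμ0, hμt⟩ := hball c ρ hρ
    have h1 : μ (ball c (2 * ρ)) ≤ ENNReal.ofReal β₆ * μ (ball c ρ) :=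
      le_trans (measure_mono (ball_subset_ball (by linarith))) hd
    have h2 : (ENNReal.ofReal β₆ * μ (ball c ρ)).toReal = β₆ * (μ (ball c ρ)).toReal := by
      rw [ENNReal.toReal_mul, ENNReal.toReal_ofReal hβ0]
    calc (μ (ball c (2 * ρ))).toReal ≤ (ENNReal.ofReal β₆ * μ (ball c ρ)).toReal :=
          ENNReal.toReal_mono (by finiteness) h1
      _ = β₆ * (μ (ball c ρ)).toReal := h2
  -- oscillation bounds in the form needed for avg_rpow_sub_le
  have hoscB : ∫ x in ball cB rB, |f x - fB cB rB| ∂μ ≤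
      (K * β₆) * (μ (ball cB rB)).toReal := by
    calc ∫ x in ball cB rB, |f x - fB cB rB| ∂μ ≤ K * (μ (ball cB (2 * rB))).toReal :=
          hosc cB rB hrB
      _ ≤ K * (β₆ * (μ (ball cB rB)).toReal) :=
          mul_le_mul_of_nonneg_left (hdouble cB rB hrB hdB) hK
      _ = (K * β₆) * (μ (ball cB rB)).toReal := by ring
  have hoscS : ∫ x in ball cS rS, |f x - fB cS rS| ∂μ ≤
      (K * β₆) * (μ (ball cS rS)).toReal := by
    calc ∫ x in ball cS rS, |f x - fB cS rS| ∂μ ≤ K * (μ (ball cS (2 * rS))).toReal :=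
          hosc cS rS hrS
      _ ≤ K * (β₆ * (μ (ball cS rS)).toReal) :=
          mul_le_mul_of_nonneg_left (hdouble cS rS hrS hdS) hK
      _ = (K * β₆) * (μ (ball cS rS)).toReal := by ring
  set δ := delta μ Λ cB rB cS rS with hδdef
  have hδ0 : 0 ≤ δ := ENNReal.toReal_nonneg
  have h1δ : (1 : ℝ) ≤ (1 + δ) ^ r := by
    calc (1 : ℝ) = 1 ^ r := (Real.one_rpow r).symm
      _ ≤ (1 + δ) ^ r := Real.rpow_le_rpow zero_le_one (by linarith) hr0.le
  have h1δ0 : 0 ≤ (1 + δ) ^ r := by linarith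
  -- middle term
  have hmid : abs (|fB cB rB| ^ r - |fB cS rS| ^ r) ≤ (1 + δ) ^ r * K ^ r := by
    calc abs (|fB cB rB| ^ r - |fB cS rS| ^ r) ≤ |fB cB rB - fB cS rS| ^ r :=
          abs_rpow_sub_abs_rpow_le' hr0.le hr1.le _ _
      _ ≤ (K * (1 + δ)) ^ r :=
          Real.rpow_le_rpow (abs_nonneg _) (hreg cB cS rB rS hrB hrS hBS) hr0.le
      _ = K ^ r * (1 + δ) ^ r := Real.mul_rpow hK (by linarith)
      _ = (1 + δ) ^ r * K ^ r := by ring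
  -- the combined epsilon estimate
  have main : ∀ ε : ℝ, 0 < ε →
      |(⨍ x in ball cB rB, |f x| ^ r ∂μ) - ⨍ x in ball cS rS, |f x| ^ r ∂μ| ≤
        2 * (ε ^ r + ε ^ (r - 1) * (K * β₆)) + (1 + δ) ^ r * K ^ r := by
    intro ε hε
    have hB := avg_rpow_sub_le μ hr0 hr1.le hμB0.ne' hμBt.ne (hint cB rB hrB) hoscB hε
    have hS := avg_rpow_sub_le μ hr0 hr1.le hμS0.ne' hμSt.ne (hint cS rS hrS) hoscS hε
    have htri : |(⨍ x in ball cB rB, |f x| ^ r ∂μ) - ⨍ x in ball cS rS, |f x| ^ r ∂μ| ≤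
        abs ((⨍ x in ball cB rB, |f x| ^ r ∂μ) - |fB cB rB| ^ r) +
        abs (|fB cB rB| ^ r - |fB cS rS| ^ r) +
        abs (|fB cS rS| ^ r - ⨍ x in ball cS rS, |f x| ^ r ∂μ) := by
      have := abs_sub_le (⨍ x in ball cB rB, |f x| ^ r ∂μ) (|fB cB rB| ^ r)
        (⨍ x in ball cS rS, |f x| ^ r ∂μ)
      have h2 := abs_sub_le (|fB cB rB| ^ r) (|fB cS rS| ^ r)
        (⨍ x in ball cS rS, |f x| ^ r ∂μ)
      linarith
    have hS' : abs (|fB cS rS| ^ r - ⨍ x in ball cS rS, |f x| ^ r ∂μ) ≤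
        ε ^ r + ε ^ (r - 1) * (K * β₆) := by rw [abs_sub_comm]; exact hS
    linarith
  rcases eq_or_lt_of_le hK with hK0 | hKpos
  · -- K = 0
    have hKz : K = 0 := hK0.symm
    subst hKz
    rw [Real.zero_rpow hr0.ne', mul_zero]
    have hle0 : |(⨍ x in ball cB rB, |f x| ^ r ∂μ) - ⨍ x in ball cS rS, |f x| ^ r ∂μ| ≤ 0 := by
      refine le_of_forall_pos_le_add ?_
      intro c hc
      have hεpos : 0 < (c / 2) ^ (1 / r) := Real.rpow_pos_of_pos (by linarith) _
      have h := main ((c / 2) ^ (1 / r)) hεpos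
      have hεr : ((c / 2) ^ (1 / r)) ^ r = c / 2 := by
        rw [← Real.rpow_mul (by linarith : (0:ℝ) ≤ c / 2), one_div_mul_cancel hr0.ne',
          Real.rpow_one]
      rw [Real.zero_rpow hr0.ne'] at h
      simp only [mul_zero, zero_mul, mul_comm] at h
      calc |(⨍ x in ball cB rB, |f x| ^ r ∂μ) - ⨍ x in ball cS rS, |f x| ^ r ∂μ| ≤
            2 * (((c / 2) ^ (1 / r)) ^ r + ((c / 2) ^ (1 / r)) ^ (r - 1) * (0 * β₆)) +
              (1 + δ) ^ r * 0 ^ r := main _ hεpos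
        _ = c := by rw [hεr, Real.zero_rpow hr0.ne']; ring
        _ ≤ 0 + c := by linarith
    exact hle0
  · -- K > 0
    have hεpos : 0 < β₆ * K := mul_pos (by linarith) hKpos
    have h := main (β₆ * K) hεpos
    have heps : (β₆ * K) ^ r + (β₆ * K) ^ (r - 1) * (K * β₆) = 2 * (β₆ * K) ^ r := by
      have : (β₆ * K) ^ (r - 1) * (β₆ * K) = (β₆ * K) ^ r := by
        rw [← Real.rpow_add_one hεpos.ne' (r - 1)]
        norm_num
      calc (β₆ * K) ^ r + (β₆ * K) ^ (r - 1) * (K * β₆) =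
            (β₆ * K) ^ r + (β₆ * K) ^ (r - 1) * (β₆ * K) := by ring
        _ = 2 * (β₆ * K) ^ r := by rw [this]; ring
    have hβr : (β₆ * K) ^ r ≤ β₆ * K ^ r := by
      rw [Real.mul_rpow hβ0 hK]
      have h1 : β₆ ^ r ≤ β₆ ^ (1 : ℝ) := Real.rpow_le_rpow_of_exponent_le hβ hr1.le
      rw [Real.rpow_one] at h1
      exact mul_le_mul_of_nonneg_right h1 (Real.rpow_nonneg hK _)
    have hKr : 0 ≤ K ^ r := Real.rpow_nonneg hK _
    have hfin : |(⨍ x in ball cB rB, |f x| ^ r ∂μ) - ⨍ x in ball cS rS, |f x| ^ r ∂μ| ≤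
        (4 * β₆ + 1) * ((1 + δ) ^ r * K ^ r) := by
      have h4 : 4 * (β₆ * K) ^ r ≤ 4 * β₆ * K ^ r := by linarith
      have h5 : 4 * β₆ * K ^ r ≤ 4 * β₆ * ((1 + δ) ^ r * K ^ r) := by
        have : K ^ r ≤ (1 + δ) ^ r * K ^ r := le_mul_of_one_le_left hKr h1δ
        have hβ4 : 0 ≤ 4 * β₆ := by linarith
        nlinarith
      calc |(⨍ x in ball cB rB, |f x| ^ r ∂μ) - ⨍ x in ball cS rS, |f x| ^ r ∂μ| ≤
            2 * ((β₆ * K) ^ r + (β₆ * K) ^ (r - 1) * (K * β₆)) + (1 + δ) ^ r * K ^ r := h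
        _ = 4 * (β₆ * K) ^ r + (1 + δ) ^ r * K ^ r := by rw [heps]; ring
        _ ≤ 4 * β₆ * ((1 + δ) ^ r * K ^ r) + (1 + δ) ^ r * K ^ r := by linarith
        _ = (4 * β₆ + 1) * ((1 + δ) ^ r * K ^ r) := by ring
    have hC : (4 * β₆ + 1) ≤ 4 * (1 + |β₆|) + 1 := by
      have := le_abs_self β₆
      linarith
    calc |(⨍ x in ball cB rB, |f x| ^ r ∂μ) - ⨍ x in ball cS rS, |f x| ^ r ∂μ| ≤
          (4 * β₆ + 1) * ((1 + δ) ^ r * K ^ r) := hfin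
      _ ≤ (4 * (1 + |β₆|) + 1) * ((1 + δ) ^ r * K ^ r) := by
          exact mul_le_mul_of_nonneg_right hC (by positivity)
      _ = (4 * (1 + |β₆|) + 1) * (1 + δ) ^ r * K ^ r := by ring
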